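/- Let (V,σ) be a symplectic vector space and Z ⊂ V* a subspace of its algebraic dual. Define a Z-action γ : Z → Aut(Weyl(V,σ)) by γ(z)(W(v)) = e^{i z(v)} W(v) for v ∈ V. Then the fixed-point subalgebra Weyl(V,σ)^γ = {a ∈ Weyl(V,σ) : γ(z)a = a for all z ∈ Z} is the C*-subalgebra generated by {W(v) : v ∈ ⋂_{z∈Z} ker z}. -/

import Mathlib

/-!
# Statement 13

Let `(V,σ)` be a symplectic vector space and `Z ⊂ V*` a subspace of its
algebraic dual.  Define a `Z`-action `γ : Z → Aut(Weyl(V,σ))` by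
`γ(z)(W(v)) = e^{i z(v)} W(v)` for `v ∈ V`.  Then the fixed-point subalgebra
`Weyl(V,σ)^γ = {a ∈ Weyl(V,σ) : γ(z)a = a for all z ∈ Z}` is the
C*-subalgebra generated by `{W(v) : v ∈ ⋂_{z∈Z} ker z}`.

The Weyl C*-algebra `Weyl(V,σ)` is modelled as a C*-algebra together with a
generating family `W : V → A` satisfying the Weyl relations; for symplectic
(nondegenerate) `σ` this determines the algebra uniquely.  The C*-subalgebra
generated by a set is the topological closure of the `*`-subalgebra it
generates (which, by the relation `W(v)* = W(−v)`, is the closure of the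
`ℂ`-subalgebra `Algebra.adjoin` of the set).
-/

noncomputable section

/-- A realisation of the Weyl C*-algebra `Weyl(V,σ)` of a pre-symplectic real
vector space `(V,σ)`: a unital C*-algebra with generators `W v`, `v ∈ V`,
satisfying the Weyl relations `W(0) = 1`, `W(v)* = W(−v)`,
`W(v)W(w) = e^{−iσ(v,w)/2} W(v+w)`, and generating a dense `*`-subalgebra. -/
structure WeylSystem (V : Type) [AddCommGroup V] [Module ℝ V]
    (σ : V →ₗ[ℝ] V →ₗ[ℝ] ℝ) where
  /-- the underlying C*-algebra. -/
  Alg : Type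
  [algCStar : CStarAlgebra Alg]
  /-- the Weyl generators. -/
  W : V → Alg
  W_zero : W 0 = 1
  W_star : ∀ v, star (W v) = W (-v)
  W_mul : ∀ v w, W v * W w = Complex.exp (-(Complex.I * (σ v w : ℝ)) / 2) • W (v + w)
  generates : (Algebra.adjoin ℂ (Set.range W)).topologicalClosure = ⊤

attribute [instance] WeylSystem.algCStar

/-- For a symplectic `(V,σ)` and a subspace `Z` of the
algebraic dual `V*`, given the action `γ` of `Z` on `Weyl(V,σ)` with
`γ(z)(W(v)) = e^{i z(v)} W(v)`, the fixed-point subalgebra equals the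
C*-subalgebra generated by the Weyl generators labelled by `⋂_{z∈Z} ker z`. -/
theorem weyl_fixed_point_subalgebra
    {V : Type} [AddCommGroup V] [Module ℝ V]
    (σ : V →ₗ[ℝ] V →ₗ[ℝ] ℝ)
    (hσ_alt : ∀ v, σ v v = 0)
    (hσ_nondeg : ∀ v, (∀ w, σ v w = 0) → v = 0)
    (S : WeylSystem V σ) [Nontrivial S.Alg]
    (Z : Submodule ℝ (Module.Dual ℝ V))
    (γ : Module.Dual ℝ V → (S.Alg ≃⋆ₐ[ℂ] S.Alg))
    (hγ : ∀ z ∈ Z, ∀ v : V, γ z (S.W v) = Complex.exp (Complex.I * (z v : ℝ)) • S.W v) :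
    {a : S.Alg | ∀ z ∈ Z, γ z a = a}
      = ((Algebra.adjoin ℂ (S.W '' {v : V | ∀ z ∈ Z, z v = 0})).topologicalClosure
          : Set S.Alg) := by
  classical
  set K : Set V := {v : V | ∀ z ∈ Z, z v = 0} with hKdef
  -- the diagonal multiplier
  set μ : Module.Dual ℝ V → V → ℂ :=
    fun z v => (2⁻¹ : ℂ) * (1 + Complex.exp (Complex.I * (z v : ℝ))) with hμdef
  -- the averaging operator
  have Tdef : ∀ z : Module.Dual ℝ V, ∃ T : S.Alg →ₗ[ℂ] S.Alg,
      ∀ x, T x = (2⁻¹ : ℂ) • (x + γ z x) := fun z =>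
    ⟨{ toFun := fun x => (2⁻¹ : ℂ) • (x + γ z x)
       map_add' := fun x y => by
         simp only [map_add, smul_add]; abel
       map_smul' := fun c x => by
         simp only [map_smul, RingHom.id_apply, smul_add, smul_comm (2⁻¹ : ℂ) c] },
     fun x => rfl⟩
  choose T hT using Tdef
  have hTnorm : ∀ z x, ‖T z x‖ ≤ ‖x‖ := by
    intro z x
    rw [hT, norm_smul]
    have h2 : ‖(2⁻¹ : ℂ)‖ = 2⁻¹ := by norm_num
    calc ‖(2⁻¹ : ℂ)‖ * ‖x + γ z x‖ ≤ 2⁻¹ * (‖x‖ + ‖γ z x‖) := by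
          rw [h2]; gcongr; exact norm_add_le _ _
      _ = ‖x‖ := by rw [StarAlgEquiv.norm_map]; ring
  have hTW : ∀ z ∈ Z, ∀ v : V, T z (S.W v) = μ z v • S.W v := by
    intro z hz v
    rw [hT, hγ z hz v]
    have h : S.W v + Complex.exp (Complex.I * ((z v : ℝ) : ℂ)) • S.W v
        = (1 + Complex.exp (Complex.I * ((z v : ℝ) : ℂ))) • S.W v := by
      rw [add_smul, one_smul]
    rw [h, smul_smul, hμdef]
  -- the composed operator
  set Φ : List (Module.Dual ℝ V) → (S.Alg →ₗ[ℂ] S.Alg) :=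
    fun L => L.foldr (fun z f => (T z).comp f) LinearMap.id with hΦdef
  have hΦcons : ∀ z L, Φ (z :: L) = (T z).comp (Φ L) := fun z L => rfl
  have hΦnorm : ∀ L x, ‖Φ L x‖ ≤ ‖x‖ := by
    intro L
    induction L with
    | nil => intro x; simp [hΦdef]
    | cons z L ih =>
        intro x
        rw [hΦcons, LinearMap.comp_apply]
        exact le_trans (hTnorm z _) (ih x)
  have hΦfix : ∀ L, (∀ z ∈ L, z ∈ Z) → ∀ x, (∀ z ∈ Z, γ z x = x) → Φ L x = x := by
    intro L
    induction L with
    | nil => intro _ x _; simp [hΦdef]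
    | cons z L ih =>
        intro hL x hx
        rw [hΦcons, LinearMap.comp_apply, ih (fun w hw => hL w (List.mem_cons_of_mem z hw)) x hx,
          hT, hx z (hL z List.mem_cons_self)]
        rw [← two_smul ℂ x, smul_smul]
        norm_num
  have hΦW : ∀ L, (∀ z ∈ L, z ∈ Z) → ∀ v : V,
      Φ L (S.W v) = (L.map (fun z => μ z v)).prod • S.W v := by
    intro L
    induction L with
    | nil => intro _ v; simp [hΦdef]
    | cons z L ih =>
        intro hL v
        rw [hΦcons, LinearMap.comp_apply, ih (fun w hw => hL w (List.mem_cons_of_mem z hw)) v,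
          map_smul, hTW z (hL z List.mem_cons_self) v, smul_smul, List.map_cons,
          List.prod_cons, mul_comm]
  apply Set.Subset.antisymm
  · -- fixed points lie in the closure of the subalgebra generated by the kernel generators
    intro a ha
    have haZ : ∀ z ∈ Z, γ z a = a := ha
    -- the span of the range of W is a subalgebra
    have h1 : (1 : S.Alg) ∈ Submodule.span ℂ (Set.range S.W) := by
      rw [← S.W_zero]; exact Submodule.subset_span ⟨0, rfl⟩
    have hmul : ∀ x y : S.Alg, x ∈ Submodule.span ℂ (Set.range S.W) →
        y ∈ Submodule.span ℂ (Set.range S.W) → x * y ∈ Submodule.span ℂ (Set.range S.W) := by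
      have : Submodule.span ℂ (Set.range S.W) * Submodule.span ℂ (Set.range S.W)
          ≤ Submodule.span ℂ (Set.range S.W) := by
        rw [Submodule.span_mul_span]
        refine Submodule.span_le.mpr ?_
        rintro x hx
        rw [Set.mem_mul] at hx
        obtain ⟨x₁, hx₁, x₂, hx₂, rfl⟩ := hx
        obtain ⟨u, rfl⟩ := hx₁
        obtain ⟨w, rfl⟩ := hx₂
        rw [SetLike.mem_coe, S.W_mul u w]
        exact Submodule.smul_mem _ _ (Submodule.subset_span ⟨u + w, rfl⟩)
      intro x y hx hy
      exact this (Submodule.mul_mem_mul hx hy)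
    have htop : a ∈ closure ((Submodule.span ℂ (Set.range S.W) : Submodule ℂ S.Alg) : Set S.Alg) := by
      have hle : Algebra.adjoin ℂ (Set.range S.W)
          ≤ (Submodule.span ℂ (Set.range S.W)).toSubalgebra h1 hmul :=
        Algebra.adjoin_le Submodule.subset_span
      have ha' : a ∈ closure ((Algebra.adjoin ℂ (Set.range S.W) : Subalgebra ℂ S.Alg) : Set S.Alg) := by
        have : a ∈ (Algebra.adjoin ℂ (Set.range S.W)).topologicalClosure := by
          rw [S.generates]; trivial
        exact this
      exact closure_mono (fun x hx => hle hx) ha'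
    show a ∈ closure ((Algebra.adjoin ℂ (S.W '' K) : Subalgebra ℂ S.Alg) : Set S.Alg)
    have hspanle : ((Submodule.span ℂ (S.W '' K) : Submodule ℂ S.Alg) : Set S.Alg)
        ⊆ ((Algebra.adjoin ℂ (S.W '' K) : Subalgebra ℂ S.Alg) : Set S.Alg) := by
      intro x hx
      exact (Submodule.span_le.mpr
        (show S.W '' K ⊆ (Subalgebra.toSubmodule (Algebra.adjoin ℂ (S.W '' K)) : Set S.Alg) from
          Algebra.subset_adjoin)) hx
    refine closure_mono hspanle ?_
    rw [Metric.mem_closure_iff]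
    intro ε hε
    obtain ⟨b, hb, hab⟩ := Metric.mem_closure_iff.mp htop ε hε
    obtain ⟨n, c, g, hbsum⟩ := Submodule.mem_span_set'.mp hb
    -- the labels of the generators appearing in b
    have hv : ∀ i : Fin n, ∃ v : V, S.W v = (g i : S.Alg) := fun i => Subtype.prop (g i)
    choose v hv using hv
    -- choose the annihilating functionals
    have zsel : ∀ i : Fin n, ∃ ζ : Module.Dual ℝ V, ζ ∈ Z ∧
        (v i ∉ K → μ ζ (v i) = 0) := by
      intro i
      by_cases h : v i ∈ K
      · exact ⟨0, Z.zero_mem, fun h' => absurd h h'⟩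
      · have : ∃ z ∈ Z, z (v i) ≠ 0 := by
          by_contra hcon
          push_neg at hcon
          exact h (fun z hz => hcon z hz)
        obtain ⟨z, hzZ, hzv⟩ := this
        refine ⟨(Real.pi / z (v i)) • z, Z.smul_mem _ hzZ, fun _ => ?_⟩
        have hval : ((Real.pi / z (v i)) • z) (v i) = Real.pi := by
          rw [LinearMap.smul_apply, smul_eq_mul, div_mul_cancel₀ _ hzv]
        rw [hμdef]
        simp only [hval]
        rw [mul_comm Complex.I _, Complex.exp_pi_mul_I]
        ring
    choose ζ hζZ hζkill using zsel
    set L : List (Module.Dual ℝ V) := List.ofFn ζ with hLdef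
    have hLZ : ∀ z ∈ L, z ∈ Z := by
      intro z hz
      rw [hLdef, List.mem_ofFn] at hz
      obtain ⟨i, rfl⟩ := hz
      exact hζZ i
    refine ⟨Φ L b, ?_, ?_⟩
    · -- Φ L b lies in the span of the kernel generators
      rw [← hbsum, map_sum]
      apply Submodule.sum_mem
      intro i _
      rw [map_smul, ← hv i, hΦW L hLZ (v i)]
      by_cases hK : v i ∈ K
      · exact Submodule.smul_mem _ _ (Submodule.smul_mem _ _
          (Submodule.subset_span ⟨v i, hK, rfl⟩))
      · have hzero : (L.map (fun z => μ z (v i))).prod = 0 := by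
          apply List.prod_eq_zero
          rw [← hζkill i hK]
          exact List.mem_map_of_mem (by rw [hLdef]; exact (List.mem_ofFn (f := ζ) (a := ζ i)).mpr ⟨i, rfl⟩)
        rw [hzero, zero_smul, smul_zero]
        exact Submodule.zero_mem _
    · -- Φ L b is close to a
      have hfix : Φ L a = a := hΦfix L hLZ a haZ
      calc dist a (Φ L b) = ‖Φ L a - Φ L b‖ := by rw [hfix, dist_eq_norm]
        _ = ‖Φ L (a - b)‖ := by rw [map_sub]
        _ ≤ ‖a - b‖ := hΦnorm L (a - b)
        _ = dist a b := (dist_eq_norm a b).symm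
        _ < ε := hab
  · -- the closure of the subalgebra consists of fixed points
    intro a ha z hz
    have hone : γ z (1 : S.Alg) = 1 := by
      have h := hγ z hz 0
      rw [S.W_zero, map_zero] at h
      simpa using h
    set F : Subalgebra ℂ S.Alg :=
      { carrier := {x : S.Alg | γ z x = x}
        mul_mem' := fun {x} {y} hx hy => by
          simp only [Set.mem_setOf_eq] at *
          rw [map_mul, hx, hy]
        one_mem' := hone
        zero_mem' := by simp only [Set.mem_setOf_eq, map_zero]
        add_mem' := fun {x} {y} hx hy => by
          simp only [Set.mem_setOf_eq] at *
          rw [map_add, hx, hy]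
        algebraMap_mem' := fun c => by
          simp only [Set.mem_setOf_eq, Algebra.algebraMap_eq_smul_one]
          rw [map_smul, hone] } with hFdef
    have hgen : S.W '' K ⊆ (F : Set S.Alg) := by
      rintro _ ⟨w, hw, rfl⟩
      show γ z (S.W w) = S.W w
      rw [hγ z hz w, hw z hz]
      simp
    have hle : Algebra.adjoin ℂ (S.W '' K) ≤ F := Algebra.adjoin_le hgen
    have hmemF : ∀ x : S.Alg, x ∈ F ↔ γ z x = x := fun x => Iff.rfl
    have hclosed : IsClosed ((F : Subalgebra ℂ S.Alg) : Set S.Alg) := by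
      have heq : ((F : Subalgebra ℂ S.Alg) : Set S.Alg)
          = (fun x => γ z x - x) ⁻¹' {0} := by
        ext x
        simp only [SetLike.mem_coe, hmemF, Set.mem_preimage, Set.mem_singleton_iff, sub_eq_zero]
      rw [heq]
      exact IsClosed.preimage
        (((StarAlgEquiv.isometry (γ z)).continuous).sub continuous_id) isClosed_singleton
    exact closure_minimal (fun x hx => hle hx) hclosed ha
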